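/- Let g be the Riemannian metric on an exterior domain of ℝ³ given in spherical coordinates by g = N(r)^{-2}dr² + r²g_{S²} with N²(r) = c₁ − m/r + c₂r, c₁, c₂ > 0. In Cartesian coordinates, g_{ij} − δ_{ij} = (x_i x_j / r²)·(1−N²)/N², which is O(r⁰) with derivatives decaying one order per derivative; consequently ∂_j∂_i∂_i g_{aa} − ∂_j∂_u∂_i g_{ui} = O(r^{-3}) and lim_{r→∞} ∫_{S²_r} (∂_j∂_i∂_i g_{aa} − ∂_j∂_u∂_i g_{ui})(x_j/r) dω_r = 0. -/

import Mathlib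

open Filter MeasureTheory

/-- Partial derivative in the `i`-th coordinate direction of a scalar function
on `ℝ³` (Euclidean). -/
noncomputable def pd3 (i : Fin 3) (f : EuclideanSpace ℝ (Fin 3) → ℝ) :
    EuclideanSpace ℝ (Fin 3) → ℝ :=
  fun x => fderiv ℝ f x (EuclideanSpace.single i 1)


open Polynomial

/-- The polynomial `c₂ u² + c₁ u - m` (equal to `u·N²(u)`). -/
noncomputable def st16M (c₁ c₂ m : ℝ) : Polynomial ℝ :=
  C c₂ * X ^ 2 + C c₁ * X - C m

/-- One differentiation step for `p(u)/(u^(2+2i) M(u)^(i+1))` followed by division by `2u`. -/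
noncomputable def st16step (c₁ c₂ m : ℝ) (i : ℕ) (p : Polynomial ℝ) : Polynomial ℝ :=
  C (2⁻¹ : ℝ) * (derivative p * X * st16M c₁ c₂ m
    - C ((2 + 2 * i : ℕ) : ℝ) * p * st16M c₁ c₂ m
    - C ((i + 1 : ℕ) : ℝ) * X * p * derivative (st16M c₁ c₂ m))

noncomputable def st16p (c₁ c₂ m : ℝ) : ℕ → Polynomial ℝ
  | 0 => X - st16M c₁ c₂ m
  | (i + 1) => st16step c₁ c₂ m i (st16p c₁ c₂ m i)

noncomputable def st16Q (c₁ c₂ m : ℝ) (i : ℕ) (t : ℝ) : ℝ :=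
  (st16p c₁ c₂ m i).eval (Real.sqrt t)
    / ((Real.sqrt t) ^ (2 + 2 * i) * ((st16M c₁ c₂ m).eval (Real.sqrt t)) ^ (i + 1))

lemma st16Q_hasDeriv (c₁ c₂ m : ℝ) (i : ℕ) (t : ℝ) (ht : 1 ≤ t)
    (hM : (st16M c₁ c₂ m).eval (Real.sqrt t) ≠ 0) :
    HasDerivAt (st16Q c₁ c₂ m i) (st16Q c₁ c₂ m (i + 1) t) t := by
  have ht0 : (0:ℝ) < t := lt_of_lt_of_le one_pos ht
  set u := Real.sqrt t with hu_def
  have hu0 : 0 < u := Real.sqrt_pos.2 ht0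
  have hu : u ≠ 0 := ne_of_gt hu0
  have hs : HasDerivAt Real.sqrt (1 / (2 * u)) t := Real.hasDerivAt_sqrt (ne_of_gt ht0)
  have hnum : HasDerivAt (fun v => (st16p c₁ c₂ m i).eval v)
      ((derivative (st16p c₁ c₂ m i)).eval u) u := Polynomial.hasDerivAt _ _
  have hden : HasDerivAt (fun v => v ^ (2 + 2 * i) * ((st16M c₁ c₂ m).eval v) ^ (i + 1))
      (((2 + 2 * i : ℕ) * u ^ (1 + 2 * i)) * ((st16M c₁ c₂ m).eval u) ^ (i + 1)
        + u ^ (2 + 2 * i) * (((i + 1 : ℕ)) * ((st16M c₁ c₂ m).eval u) ^ i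
            * (derivative (st16M c₁ c₂ m)).eval u)) u := by
    have h1 : HasDerivAt (fun v : ℝ => v ^ (2 + 2 * i))
        ((2 + 2 * i : ℕ) * u ^ (1 + 2 * i)) u := by
      have h := hasDerivAt_pow (2 + 2 * i) u
      rw [show 2 + 2 * i - 1 = 1 + 2 * i from by omega] at h
      exact_mod_cast h
    have h2 : HasDerivAt (fun v => ((st16M c₁ c₂ m).eval v) ^ (i + 1))
        (((i + 1 : ℕ)) * ((st16M c₁ c₂ m).eval u) ^ i * (derivative (st16M c₁ c₂ m)).eval u)
        u := by
      have := (Polynomial.hasDerivAt (st16M c₁ c₂ m) u).pow (i + 1)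
      have h2' : HasDerivAt (fun v => ((st16M c₁ c₂ m).eval v) ^ (i + 1)) _ u := this
      simpa using h2'
    have h12 : HasDerivAt (fun v => v ^ (2 + 2 * i) * ((st16M c₁ c₂ m).eval v) ^ (i + 1)) _ u :=
      h1.mul h2
    simpa [mul_comm, mul_assoc, mul_left_comm] using h12
  have hden0 : u ^ (2 + 2 * i) * ((st16M c₁ c₂ m).eval u) ^ (i + 1) ≠ 0 := by
    positivity
  have hq := (hnum.div hden hden0).comp t hs
  have heq : st16Q c₁ c₂ m i = (fun v => (st16p c₁ c₂ m i).eval v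
      / (v ^ (2 + 2 * i) * ((st16M c₁ c₂ m).eval v) ^ (i + 1))) ∘ Real.sqrt := rfl
  rw [heq]
  refine hq.congr_deriv ?_
  symm
  rw [st16Q]
  simp only [st16p, st16step, eval_mul, eval_sub, eval_add, eval_C, eval_X, eval_natCast,
    ← hu_def]
  have hMu := hM
  field_simp
  ring

lemma st16M_natDegree (c₁ c₂ m : ℝ) : (st16M c₁ c₂ m).natDegree ≤ 2 := by
  unfold st16M
  apply le_trans (natDegree_sub_le _ _)
  simp only [natDegree_C, max_le_iff]
  constructor
  · apply le_trans (natDegree_add_le _ _)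
    simp [natDegree_C, natDegree_X]
    constructor
    · exact le_trans (natDegree_mul_le) (by simp [natDegree_X_pow])
    · exact le_trans (natDegree_mul_le) (by simp)
  · omega

lemma st16p_natDegree (c₁ c₂ m : ℝ) (i : ℕ) : (st16p c₁ c₂ m i).natDegree ≤ 2 + 2 * i := by
  induction i with
  | zero =>
    show (X - st16M c₁ c₂ m).natDegree ≤ 2 + 2 * 0
    refine le_trans (natDegree_sub_le _ _) (max_le ?_ ?_)
    · simp [natDegree_X]
    · have := st16M_natDegree c₁ c₂ m
      omega
  | succ i ih =>
    show (st16step c₁ c₂ m i (st16p c₁ c₂ m i)).natDegree ≤ 2 + 2 * (i+1)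
    unfold st16step
    apply le_trans natDegree_mul_le
    simp only [natDegree_C, zero_add]
    apply le_trans (natDegree_sub_le _ _)
    apply max_le
    · apply le_trans (natDegree_sub_le _ _)
      apply max_le
      · apply le_trans natDegree_mul_le
        have h1 : (derivative (st16p c₁ c₂ m i) * X).natDegree ≤ 2 + 2*i := by
          apply le_trans natDegree_mul_le
          have := natDegree_derivative_le (st16p c₁ c₂ m i)
          simp only [natDegree_X]
          omega
        have := st16M_natDegree c₁ c₂ m
        omega
      · apply le_trans natDegree_mul_le
        have h1 : (C ((2 + 2 * i : ℕ) : ℝ) * st16p c₁ c₂ m i).natDegree ≤ 2 + 2*i := by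
          refine le_trans natDegree_mul_le ?_
          rw [natDegree_C]
          omega
        have := st16M_natDegree c₁ c₂ m
        omega
    · apply le_trans natDegree_mul_le
      have h1 : (C ((i + 1 : ℕ) : ℝ) * X * st16p c₁ c₂ m i).natDegree ≤ 2 + 2*i + 1 := by
        apply le_trans natDegree_mul_le
        have h2 : (C ((i + 1 : ℕ) : ℝ) * X).natDegree ≤ 1 := by
          refine le_trans natDegree_mul_le ?_
          rw [natDegree_C, natDegree_X]
        omega
      have h3 := natDegree_derivative_le (st16M c₁ c₂ m)
      have := st16M_natDegree c₁ c₂ m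
      omega

/-- Sum of absolute values of coefficients up to degree `2+2i`. -/
noncomputable def st16S (c₁ c₂ m : ℝ) (i : ℕ) : ℝ :=
  ∑ j ∈ Finset.range (2 + 2 * i + 1), |(st16p c₁ c₂ m i).coeff j|

lemma st16_eval_abs_le (p : Polynomial ℝ) (d : ℕ) (hd : p.natDegree ≤ d) (u : ℝ) (hu : 1 ≤ u) :
    |p.eval u| ≤ (∑ j ∈ Finset.range (d + 1), |p.coeff j|) * u ^ d := by
  have h0 : (0:ℝ) < u := lt_of_lt_of_le one_pos hu
  rw [Polynomial.eval_eq_sum_range' (lt_of_le_of_lt hd (Nat.lt_succ_self d))]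
  calc |∑ j ∈ Finset.range (d + 1), p.coeff j * u ^ j|
      ≤ ∑ j ∈ Finset.range (d + 1), |p.coeff j * u ^ j| := Finset.abs_sum_le_sum_abs _ _
    _ ≤ ∑ j ∈ Finset.range (d + 1), |p.coeff j| * u ^ d := by
        apply Finset.sum_le_sum
        intro j hj
        rw [abs_mul, abs_pow, abs_of_pos h0]
        apply mul_le_mul_of_nonneg_left _ (abs_nonneg _)
        exact pow_le_pow_right₀ hu (by simpa using Nat.lt_succ_iff.1 (Finset.mem_range.1 hj))
    _ = _ := by rw [← Finset.sum_mul]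

noncomputable def st16u₁ (c₂ m : ℝ) : ℝ := max 1 (Real.sqrt (2 * |m| / c₂))

lemma st16M_lower (c₁ c₂ m : ℝ) (hc₁ : 0 < c₁) (hc₂ : 0 < c₂) (u : ℝ)
    (hu : st16u₁ c₂ m ≤ u) : c₂ / 2 * u ^ 2 ≤ (st16M c₁ c₂ m).eval u := by
  have hu1 : (1:ℝ) ≤ u := le_trans (le_max_left _ _) hu
  have hu0 : (0:ℝ) ≤ u := by linarith
  have hs : Real.sqrt (2 * |m| / c₂) ≤ u := le_trans (le_max_right _ _) hu
  have h2 : 2 * |m| / c₂ ≤ u ^ 2 := by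
    nlinarith [Real.sq_sqrt (by positivity : (0:ℝ) ≤ 2 * |m| / c₂),
      Real.sqrt_nonneg (2 * |m| / c₂)]
  have hm : |m| ≤ c₂ / 2 * u ^ 2 := by
    rw [div_le_iff₀ hc₂] at h2
    nlinarith
  simp only [st16M, eval_sub, eval_add, eval_mul, eval_C, eval_X, eval_pow]
  nlinarith [le_abs_self m, mul_nonneg (le_of_lt hc₁) hu0]

lemma st16u₁_pos (c₂ m : ℝ) : (1:ℝ) ≤ st16u₁ c₂ m := le_max_left _ _

lemma st16M_pos (c₁ c₂ m : ℝ) (hc₁ : 0 < c₁) (hc₂ : 0 < c₂) (u : ℝ)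
    (hu : st16u₁ c₂ m ≤ u) : 0 < (st16M c₁ c₂ m).eval u := by
  have hu1 : (1:ℝ) ≤ u := le_trans (st16u₁_pos c₂ m) hu
  have h := st16M_lower c₁ c₂ m hc₁ hc₂ u hu
  have h2 : (0:ℝ) < c₂ / 2 * u ^ 2 := by positivity
  linarith

noncomputable def st16C (c₁ c₂ m : ℝ) (i : ℕ) : ℝ := st16S c₁ c₂ m i * (2 / c₂) ^ (i + 1)

lemma st16C_nonneg (c₁ c₂ m : ℝ) (hc₂ : 0 < c₂) (i : ℕ) : 0 ≤ st16C c₁ c₂ m i := by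
  unfold st16C st16S
  apply mul_nonneg (Finset.sum_nonneg fun j _ => abs_nonneg _) (by positivity)

lemma st16Q_bound (c₁ c₂ m : ℝ) (hc₁ : 0 < c₁) (hc₂ : 0 < c₂) (i : ℕ) (t : ℝ)
    (ht : st16u₁ c₂ m ≤ Real.sqrt t) :
    |st16Q c₁ c₂ m i t| ≤ st16C c₁ c₂ m i / t ^ (i + 1) := by
  set u := Real.sqrt t with hu_def
  have hu1 : (1:ℝ) ≤ u := le_trans (st16u₁_pos c₂ m) ht
  have hu0 : (0:ℝ) < u := lt_of_lt_of_le one_pos hu1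
  have ht0 : (0:ℝ) ≤ t := by
    by_contra h
    push_neg at h
    rw [hu_def, Real.sqrt_eq_zero_of_nonpos (le_of_lt h)] at hu1
    linarith
  have hu2 : u ^ 2 = t := Real.sq_sqrt ht0
  have hMl := st16M_lower c₁ c₂ m hc₁ hc₂ u ht
  have hMp := st16M_pos c₁ c₂ m hc₁ hc₂ u ht
  have hnum : |(st16p c₁ c₂ m i).eval u| ≤ st16S c₁ c₂ m i * u ^ (2 + 2 * i) :=
    st16_eval_abs_le _ _ (st16p_natDegree c₁ c₂ m i) u hu1
  have ht1 : (0:ℝ) < t := by nlinarith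
  have hden_pos : 0 < u ^ (2 + 2 * i) * ((st16M c₁ c₂ m).eval u) ^ (i + 1) := by positivity
  rw [st16Q, abs_div, abs_of_pos hden_pos, ← hu_def]
  rw [div_le_div_iff₀ hden_pos (pow_pos ht1 (i+1))]
  have hden_low : (c₂ / 2) ^ (i + 1) * u ^ (2 + 2 * i) * t ^ (i + 1)
      ≤ u ^ (2 + 2 * i) * ((st16M c₁ c₂ m).eval u) ^ (i + 1) := by
    have h1 : (c₂ / 2 * u ^ 2) ^ (i + 1) ≤ ((st16M c₁ c₂ m).eval u) ^ (i + 1) :=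
      pow_le_pow_left₀ (by positivity) hMl (i + 1)
    calc (c₂ / 2) ^ (i + 1) * u ^ (2 + 2 * i) * t ^ (i + 1)
        = u ^ (2 + 2 * i) * (c₂ / 2 * u ^ 2) ^ (i + 1) := by
          rw [← hu2]; ring
      _ ≤ _ := mul_le_mul_of_nonneg_left h1 (by positivity)
  have hS : 0 ≤ st16S c₁ c₂ m i := Finset.sum_nonneg fun j _ => abs_nonneg _
  have hcc : ((2:ℝ) / c₂) * (c₂ / 2) = 1 := by field_simp
  have key : u ^ (2 + 2 * i) * t ^ (i + 1)
      ≤ (2 / c₂) ^ (i + 1) * (u ^ (2 + 2 * i) * ((st16M c₁ c₂ m).eval u) ^ (i + 1)) := by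
    calc u ^ (2 + 2 * i) * t ^ (i + 1)
        = ((2 / c₂) * (c₂ / 2)) ^ (i + 1) * (u ^ (2 + 2 * i) * t ^ (i + 1)) := by
          rw [hcc, one_pow, one_mul]
      _ = (2 / c₂) ^ (i + 1) * ((c₂ / 2) ^ (i + 1) * u ^ (2 + 2 * i) * t ^ (i + 1)) := by
          rw [mul_pow]; ring
      _ ≤ _ := mul_le_mul_of_nonneg_left hden_low (by positivity)
  calc |(st16p c₁ c₂ m i).eval u| * t ^ (i + 1)
      ≤ (st16S c₁ c₂ m i * u ^ (2 + 2 * i)) * t ^ (i + 1) :=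
        mul_le_mul_of_nonneg_right hnum (by positivity)
    _ = st16S c₁ c₂ m i * (u ^ (2 + 2 * i) * t ^ (i + 1)) := by ring
    _ ≤ st16S c₁ c₂ m i * ((2 / c₂) ^ (i + 1) * (u ^ (2 + 2 * i) * ((st16M c₁ c₂ m).eval u) ^ (i + 1))) :=
        mul_le_mul_of_nonneg_left key hS
    _ = st16C c₁ c₂ m i * (u ^ (2 + 2 * i) * ((st16M c₁ c₂ m).eval u) ^ (i + 1)) := by
        rw [st16C]; ring

abbrev E3 := EuclideanSpace ℝ (Fin 3)

def st16mon (L : List (Fin 3)) (x : E3) : ℝ := (L.map (fun i => x i)).prod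

lemma st16mon_nil (x : E3) : st16mon [] x = 1 := rfl
lemma st16mon_cons (a : Fin 3) (L : List (Fin 3)) (x : E3) :
    st16mon (a :: L) x = x a * st16mon L x := by simp [st16mon]

noncomputable def st16monD : List (Fin 3) → E3 → (E3 →L[ℝ] ℝ)
  | [], _ => 0
  | (a :: L), x => x a • st16monD L x + st16mon L x • (EuclideanSpace.proj a)

lemma st16mon_hasFDeriv (L : List (Fin 3)) (x : E3) :
    HasFDerivAt (st16mon L) (st16monD L x) x := by
  induction L with
  | nil =>
    exact hasFDerivAt_const (1:ℝ) x
  | cons a L ih =>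
    have ha : HasFDerivAt (fun y : E3 => y a)
        (EuclideanSpace.proj a : E3 →L[ℝ] ℝ) x :=
      (EuclideanSpace.proj a (𝕜 := ℝ)).hasFDerivAt
    have h : HasFDerivAt (fun y : E3 => y a * st16mon L y) _ x := ha.mul ih
    have : (fun y : E3 => y a * st16mon L y) = st16mon (a :: L) := by
      funext y; rw [st16mon_cons]
    rw [this] at h
    exact h

def st16dmon (k : Fin 3) : List (Fin 3) → E3 → ℝ
  | [], _ => 0
  | (a :: L), x => x a * st16dmon k L x + (if a = k then st16mon L x else 0)

lemma st16monD_apply (k : Fin 3) (L : List (Fin 3)) (x : E3) :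
    st16monD L x (EuclideanSpace.single k 1) = st16dmon k L x := by
  induction L with
  | nil => simp [st16monD, st16dmon]
  | cons a L ih =>
    simp only [st16monD, st16dmon, ContinuousLinearMap.add_apply,
      ContinuousLinearMap.smul_apply, ih, smul_eq_mul]
    congr 1
    have : (EuclideanSpace.proj a (𝕜 := ℝ)) (EuclideanSpace.single k 1)
        = (EuclideanSpace.single k (1:ℝ)) a := rfl
    rw [this, EuclideanSpace.single_apply]
    by_cases h : a = k
    · simp [h]
    · rw [if_neg h, if_neg h, mul_zero]

noncomputable def st16s (x : E3) : ℝ := ∑ i, x i ^ 2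

lemma st16s_eq (x : E3) : st16s x = ‖x‖ ^ 2 := by
  rw [EuclideanSpace.norm_eq, Real.sq_sqrt (Finset.sum_nonneg fun i _ => sq_nonneg _)]
  unfold st16s
  congr 1
  funext i
  rw [Real.norm_eq_abs, sq_abs]

noncomputable def st16sD (x : E3) : E3 →L[ℝ] ℝ :=
  ∑ i, (2 * x i) • (EuclideanSpace.proj i : E3 →L[ℝ] ℝ)

lemma st16s_hasFDeriv (x : E3) : HasFDerivAt st16s (st16sD x) x := by
  have h : ∀ i : Fin 3, HasFDerivAt (fun y : E3 => y i ^ 2)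
      ((2 * x i) • (EuclideanSpace.proj i : E3 →L[ℝ] ℝ)) x := by
    intro i
    have ha : HasFDerivAt (fun y : E3 => y i)
        (EuclideanSpace.proj i : E3 →L[ℝ] ℝ) x :=
      (EuclideanSpace.proj i (𝕜 := ℝ)).hasFDerivAt
    have : HasFDerivAt (fun y : E3 => y i * y i) _ x := ha.mul ha
    have heq : (fun y : E3 => y i * y i) = fun y : E3 => y i ^ 2 := by
      funext y; ring
    rw [heq] at this
    rw [two_mul, add_smul]
    exact this
  exact HasFDerivAt.fun_sum fun i _ => h i

lemma st16sD_apply (x : E3) (k : Fin 3) :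
    st16sD x (EuclideanSpace.single k 1) = 2 * x k := by
  simp only [st16sD, ContinuousLinearMap.sum_apply, ContinuousLinearMap.smul_apply,
    smul_eq_mul]
  have h : ∀ i : Fin 3, (EuclideanSpace.proj i (𝕜 := ℝ)) (EuclideanSpace.single k 1)
      = if i = k then (1:ℝ) else 0 := by
    intro i
    have h2 : (EuclideanSpace.proj i (𝕜 := ℝ)) (EuclideanSpace.single k 1)
        = (EuclideanSpace.single k (1:ℝ)) i := rfl
    rw [h2, EuclideanSpace.single_apply]
  simp only [h, mul_ite, mul_one, mul_zero]
  rw [Finset.sum_ite_eq' _ k]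
  simp

/-! ### Formal term calculus on ℝ³ -/

abbrev st16Term := ℝ × List (Fin 3) × ℕ
abbrev st16Terms := List st16Term

noncomputable def st16evalT (c₁ c₂ m : ℝ) (ts : st16Terms) (x : E3) : ℝ :=
  (ts.map (fun q => q.1 * st16mon q.2.1 x * st16Q c₁ c₂ m q.2.2 (st16s x))).sum

def st16dmonT (k : Fin 3) : List (Fin 3) → List (List (Fin 3))
  | [] => []
  | (a :: L) => (if a = k then [L] else []) ++ (st16dmonT k L).map (a :: ·)

def st16dT (k : Fin 3) (ts : st16Terms) : st16Terms :=
  ts.flatMap (fun q => (st16dmonT k q.2.1).map (fun L' => (q.1, L', q.2.2))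
    ++ [(2 * q.1, k :: q.2.1, q.2.2 + 1)])

lemma st16sum_map_cons (a : Fin 3) (ls : List (List (Fin 3))) (x : E3) :
    (ls.map (fun L' => st16mon (a :: L') x)).sum
      = x a * (ls.map (fun L' => st16mon L' x)).sum := by
  simp only [st16mon_cons]
  exact List.sum_map_mul_left ls (fun L' => st16mon L' x) (x a)

lemma st16dmonT_sum (k : Fin 3) (L : List (Fin 3)) (x : E3) :
    ((st16dmonT k L).map (fun L' => st16mon L' x)).sum = st16dmon k L x := by
  induction L with
  | nil => simp [st16dmonT, st16dmon]
  | cons a L ih =>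
    simp only [st16dmonT, st16dmon, List.map_append, List.sum_append, List.map_map,
      Function.comp_def]
    rw [st16sum_map_cons, ih, add_comm]
    congr 1
    by_cases h : a = k <;> simp [h]

noncomputable def st16TD (c₁ c₂ m : ℝ) : st16Terms → E3 → (E3 →L[ℝ] ℝ)
  | [], _ => 0
  | (q :: ts), x =>
    ((q.1 * st16mon q.2.1 x) • (st16Q c₁ c₂ m (q.2.2 + 1) (st16s x) • st16sD x)
      + st16Q c₁ c₂ m q.2.2 (st16s x) • (q.1 • st16monD q.2.1 x)) + st16TD c₁ c₂ m ts x

lemma st16evalT_cons (c₁ c₂ m : ℝ) (q : st16Term) (ts : st16Terms) (x : E3) :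
    st16evalT c₁ c₂ m (q :: ts) x
      = q.1 * st16mon q.2.1 x * st16Q c₁ c₂ m q.2.2 (st16s x) + st16evalT c₁ c₂ m ts x := by
  simp [st16evalT]

lemma st16evalT_hasFDeriv (c₁ c₂ m : ℝ) (hc₁ : 0 < c₁) (hc₂ : 0 < c₂)
    (ts : st16Terms) (x : E3) (hx : st16u₁ c₂ m ≤ ‖x‖) :
    HasFDerivAt (st16evalT c₁ c₂ m ts) (st16TD c₁ c₂ m ts x) x := by
  have hxn : (0:ℝ) ≤ ‖x‖ := norm_nonneg x
  have hx1 : (1:ℝ) ≤ ‖x‖ := le_trans (st16u₁_pos c₂ m) hx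
  have hsx : Real.sqrt (st16s x) = ‖x‖ := by
    rw [st16s_eq, Real.sqrt_sq hxn]
  have hts : (1:ℝ) ≤ st16s x := by
    rw [st16s_eq]; nlinarith
  have hM : (st16M c₁ c₂ m).eval (Real.sqrt (st16s x)) ≠ 0 := by
    rw [hsx]
    exact ne_of_gt (st16M_pos c₁ c₂ m hc₁ hc₂ _ hx)
  induction ts with
  | nil => exact hasFDerivAt_const (0:ℝ) x
  | cons q ts ih =>
    have heq : st16evalT c₁ c₂ m (q :: ts)
        = fun y => (q.1 * st16mon q.2.1 y) * st16Q c₁ c₂ m q.2.2 (st16s y)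
            + st16evalT c₁ c₂ m ts y := by
      funext y; rw [st16evalT_cons]
    rw [heq]
    have hmon : HasFDerivAt (fun y => q.1 * st16mon q.2.1 y) (q.1 • st16monD q.2.1 x) x :=
      (st16mon_hasFDeriv q.2.1 x).const_mul q.1
    have hq : HasDerivAt (st16Q c₁ c₂ m q.2.2) (st16Q c₁ c₂ m (q.2.2 + 1) (st16s x))
        (st16s x) := st16Q_hasDeriv c₁ c₂ m q.2.2 (st16s x) hts hM
    have hcomp : HasFDerivAt (fun y => st16Q c₁ c₂ m q.2.2 (st16s y))
        (st16Q c₁ c₂ m (q.2.2 + 1) (st16s x) • st16sD x) x :=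
      hq.comp_hasFDerivAt x (st16s_hasFDeriv x)
    exact (hmon.mul hcomp).add ih

lemma st16evalT_append (c₁ c₂ m : ℝ) (ts₁ ts₂ : st16Terms) (x : E3) :
    st16evalT c₁ c₂ m (ts₁ ++ ts₂) x = st16evalT c₁ c₂ m ts₁ x + st16evalT c₁ c₂ m ts₂ x := by
  simp [st16evalT]

lemma st16TD_apply (c₁ c₂ m : ℝ) (k : Fin 3) (ts : st16Terms) (x : E3) :
    st16TD c₁ c₂ m ts x (EuclideanSpace.single k 1)
      = st16evalT c₁ c₂ m (st16dT k ts) x := by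
  induction ts with
  | nil => simp [st16TD, st16dT, st16evalT]
  | cons q ts ih =>
    obtain ⟨c, L, i⟩ := q
    have hdT : st16dT k ((c, L, i) :: ts)
        = ((st16dmonT k L).map (fun L' => ((c, L', i) : st16Term))
            ++ [((2*c, k :: L, i+1) : st16Term)]) ++ st16dT k ts := by
      simp [st16dT]
    rw [hdT, st16evalT_append, st16evalT_append]
    simp only [st16TD, ContinuousLinearMap.add_apply, ContinuousLinearMap.smul_apply,
      smul_eq_mul, ih, st16sD_apply, st16monD_apply]
    congr 1
    have h1 : st16evalT c₁ c₂ m ((st16dmonT k L).map (fun L' => ((c, L', i) : st16Term))) x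
        = (c * st16Q c₁ c₂ m i (st16s x)) * st16dmon k L x := by
      rw [st16evalT, List.map_map]
      have heq : ((fun q : st16Term => q.1 * st16mon q.2.1 x * st16Q c₁ c₂ m q.2.2 (st16s x))
          ∘ (fun L' => ((c, L', i) : st16Term)))
          = fun L' => (c * st16Q c₁ c₂ m i (st16s x)) * st16mon L' x := by
        funext L'; simp only [Function.comp_apply]; ring
      rw [heq, List.sum_map_mul_left, st16dmonT_sum]
    rw [h1]
    have h2 : st16evalT c₁ c₂ m [((2*c, k :: L, i+1) : st16Term)] x
        = 2 * c * (x k * st16mon L x) * st16Q c₁ c₂ m (i+1) (st16s x) := by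
      simp [st16evalT, st16mon_cons]
    rw [h2]
    ring

lemma st16coord_le (x : E3) (a : Fin 3) : |x a| ≤ ‖x‖ := by
  have h : (x a) ^ 2 ≤ ∑ i, ‖x i‖ ^ 2 := by
    have := Finset.single_le_sum (f := fun i => ‖x i‖ ^ 2)
      (fun i _ => sq_nonneg _) (Finset.mem_univ a)
    simpa [Real.norm_eq_abs, sq_abs] using this
  calc |x a| = Real.sqrt ((x a) ^ 2) := (Real.sqrt_sq_eq_abs _).symm
    _ ≤ Real.sqrt (∑ i, ‖x i‖ ^ 2) := Real.sqrt_le_sqrt h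
    _ = ‖x‖ := (EuclideanSpace.norm_eq x).symm

lemma st16mon_abs_le (L : List (Fin 3)) (x : E3) :
    |st16mon L x| ≤ ‖x‖ ^ L.length := by
  induction L with
  | nil => simp [st16mon_nil]
  | cons a L ih =>
    rw [st16mon_cons, abs_mul, List.length_cons, pow_succ']
    exact mul_le_mul (st16coord_le x a) ih (abs_nonneg _) (norm_nonneg _)

noncomputable def st16CT (c₁ c₂ m : ℝ) (ts : st16Terms) : ℝ :=
  (ts.map (fun q => |q.1| * st16C c₁ c₂ m q.2.2)).sum

lemma st16CT_nonneg (c₁ c₂ m : ℝ) (hc₂ : 0 < c₂) (ts : st16Terms) :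
    0 ≤ st16CT c₁ c₂ m ts := by
  apply List.sum_nonneg
  intro y hy
  obtain ⟨q, _, rfl⟩ := List.mem_map.1 hy
  exact mul_nonneg (abs_nonneg _) (st16C_nonneg c₁ c₂ m hc₂ _)

lemma st16evalT_bound (c₁ c₂ m : ℝ) (hc₁ : 0 < c₁) (hc₂ : 0 < c₂)
    (ts : st16Terms) (w : ℕ)
    (hw : ∀ q ∈ ts, q.2.1.length + w ≤ 2 * (q.2.2 + 1))
    (x : E3) (hx : st16u₁ c₂ m ≤ ‖x‖) :
    |st16evalT c₁ c₂ m ts x| ≤ st16CT c₁ c₂ m ts / ‖x‖ ^ w := by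
  have ha1 : (1:ℝ) ≤ ‖x‖ := le_trans (st16u₁_pos c₂ m) hx
  have ha0 : (0:ℝ) < ‖x‖ := lt_of_lt_of_le one_pos ha1
  have hsx : Real.sqrt (st16s x) = ‖x‖ := by
    rw [st16s_eq, Real.sqrt_sq (norm_nonneg x)]
  induction ts with
  | nil => simp [st16evalT, st16CT]
  | cons q ts ih =>
    obtain ⟨c, L, i⟩ := q
    have hQ : |st16Q c₁ c₂ m i (st16s x)| ≤ st16C c₁ c₂ m i / (st16s x) ^ (i+1) :=
      st16Q_bound c₁ c₂ m hc₁ hc₂ i (st16s x) (hsx ▸ hx)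
    have hsp : (st16s x) ^ (i+1) = ‖x‖ ^ (2*(i+1)) := by
      rw [st16s_eq, ← pow_mul, mul_comm 2 (i+1), pow_mul, ← pow_mul, mul_comm (i+1) 2]
    have hlen : L.length + w ≤ 2 * (i + 1) := hw _ List.mem_cons_self
    have hCnn := st16C_nonneg c₁ c₂ m hc₂ i
    have hhead : |c * st16mon L x * st16Q c₁ c₂ m i (st16s x)|
        ≤ |c| * st16C c₁ c₂ m i / ‖x‖ ^ w := by
      rw [abs_mul, abs_mul]
      have step1 : |c| * |st16mon L x| * |st16Q c₁ c₂ m i (st16s x)|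
          ≤ |c| * (‖x‖ ^ L.length * (st16C c₁ c₂ m i / ‖x‖ ^ (2*(i+1)))) := by
        rw [hsp] at hQ
        calc |c| * |st16mon L x| * |st16Q c₁ c₂ m i (st16s x)|
            = |c| * (|st16mon L x| * |st16Q c₁ c₂ m i (st16s x)|) := by ring
          _ ≤ |c| * (‖x‖ ^ L.length * (st16C c₁ c₂ m i / ‖x‖ ^ (2*(i+1)))) := by
              apply mul_le_mul_of_nonneg_left _ (abs_nonneg c)
              exact mul_le_mul (st16mon_abs_le L x) hQ (abs_nonneg _) (by positivity)
      refine le_trans step1 ?_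
      have h2 : ‖x‖ ^ L.length * (st16C c₁ c₂ m i / ‖x‖ ^ (2*(i+1)))
          ≤ st16C c₁ c₂ m i / ‖x‖ ^ w := by
        rw [mul_div_assoc', div_le_div_iff₀ (by positivity) (by positivity)]
        calc ‖x‖ ^ L.length * st16C c₁ c₂ m i * ‖x‖ ^ w
            = st16C c₁ c₂ m i * ‖x‖ ^ (L.length + w) := by rw [pow_add]; ring
          _ ≤ st16C c₁ c₂ m i * ‖x‖ ^ (2*(i+1)) :=
              mul_le_mul_of_nonneg_left (pow_le_pow_right₀ ha1 hlen) hCnn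
      calc |c| * (‖x‖ ^ L.length * (st16C c₁ c₂ m i / ‖x‖ ^ (2*(i+1))))
          ≤ |c| * (st16C c₁ c₂ m i / ‖x‖ ^ w) := mul_le_mul_of_nonneg_left h2 (abs_nonneg c)
        _ = |c| * st16C c₁ c₂ m i / ‖x‖ ^ w := by ring
    calc |st16evalT c₁ c₂ m ((c, L, i) :: ts) x|
        ≤ |c * st16mon L x * st16Q c₁ c₂ m i (st16s x)| + |st16evalT c₁ c₂ m ts x| := by
          rw [st16evalT_cons]; exact abs_add_le _ _
      _ ≤ |c| * st16C c₁ c₂ m i / ‖x‖ ^ w + st16CT c₁ c₂ m ts / ‖x‖ ^ w := by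
          apply add_le_add hhead (ih (fun q hq => hw q (List.mem_cons_of_mem _ hq)))
      _ = st16CT c₁ c₂ m ((c, L, i) :: ts) / ‖x‖ ^ w := by
          rw [st16CT, st16CT, List.map_cons, List.sum_cons, add_div]

lemma st16dmonT_length (k : Fin 3) (L : List (Fin 3)) :
    ∀ L' ∈ st16dmonT k L, L'.length + 1 = L.length := by
  induction L with
  | nil => simp [st16dmonT]
  | cons a L ih =>
    intro L' hL'
    rcases List.mem_append.1 hL' with h | h
    · by_cases hak : a = k
      · simp [hak] at h
        simp [h]
      · simp [hak] at h
    · obtain ⟨L'', hL'', rfl⟩ := List.mem_map.1 h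
      have := ih L'' hL''
      simp only [List.length_cons]
      omega

lemma st16dT_wt (k : Fin 3) (ts : st16Terms) (w : ℕ)
    (h : ∀ q ∈ ts, q.2.1.length + w ≤ 2 * (q.2.2 + 1)) :
    ∀ q' ∈ st16dT k ts, q'.2.1.length + (w + 1) ≤ 2 * (q'.2.2 + 1) := by
  intro q' hq'
  obtain ⟨q, hq, hmem⟩ := List.mem_flatMap.1 hq'
  have hwq := h q hq
  rcases List.mem_append.1 hmem with hm | hm
  · obtain ⟨L', hL', rfl⟩ := List.mem_map.1 hm
    have := st16dmonT_length k q.2.1 L' hL'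
    simp only
    omega
  · simp only [List.mem_singleton] at hm
    subst hm
    simp only [List.length_cons]
    omega

/-! ### Finiteness of `μH[2]` of the unit sphere in ℝ³ -/

open MeasureTheory
open scoped NNReal ENNReal

lemma st16sin_lip (a b : ℝ) : |Real.sin a - Real.sin b| ≤ |a - b| := by
  rw [Real.sin_sub_sin, abs_mul, abs_mul]
  have h1 : |Real.sin ((a - b) / 2)| ≤ |a - b| / 2 := by
    have := Real.abs_sin_le_abs (x := (a - b)/2)
    rwa [abs_div, abs_two] at this
  have h2 : |Real.cos ((a + b) / 2)| ≤ 1 := Real.abs_cos_le_one _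
  have h3 : |(2:ℝ)| = 2 := by norm_num
  rw [h3]
  nlinarith [abs_nonneg (Real.sin ((a-b)/2)), abs_nonneg (a - b)]

lemma st16cos_lip (a b : ℝ) : |Real.cos a - Real.cos b| ≤ |a - b| := by
  rw [Real.cos_sub_cos, abs_mul, abs_mul]
  have h1 : |Real.sin ((a - b) / 2)| ≤ |a - b| / 2 := by
    have := Real.abs_sin_le_abs (x := (a - b)/2)
    rwa [abs_div, abs_two] at this
  have h2 : |Real.sin ((a + b) / 2)| ≤ 1 := Real.abs_sin_le_one _
  have h3 : |(-2:ℝ)| = 2 := by norm_num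
  rw [h3]
  nlinarith [abs_nonneg (Real.sin ((a-b)/2)), abs_nonneg (a - b)]

/-- Spherical-coordinates parametrization of the unit sphere. -/
noncomputable def st16F (p : Fin 2 → ℝ) : E3 :=
  (WithLp.equiv 2 (Fin 3 → ℝ)).symm
    ![Real.sin (p 0) * Real.cos (p 1), Real.sin (p 0) * Real.sin (p 1), Real.cos (p 0)]

lemma st16F_apply (p : Fin 2 → ℝ) (j : Fin 3) :
    st16F p j = ![Real.sin (p 0) * Real.cos (p 1),
      Real.sin (p 0) * Real.sin (p 1), Real.cos (p 0)] j := rfl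

lemma st16F_lip : LipschitzWith 6 st16F := by
  apply LipschitzWith.of_dist_le_mul
  intro p q
  have hd0 : |p 0 - q 0| ≤ dist p q := by
    rw [← Real.dist_eq]; exact dist_le_pi_dist p q 0
  have hd1 : |p 1 - q 1| ≤ dist p q := by
    rw [← Real.dist_eq]; exact dist_le_pi_dist p q 1
  have hdn : (0:ℝ) ≤ dist p q := dist_nonneg
  have key : ∀ j : Fin 3, |st16F p j - st16F q j| ≤ 2 * dist p q := by
    intro j
    fin_cases j <;> simp only [st16F_apply, Matrix.cons_val_zero, Matrix.cons_val_one,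
      Matrix.head_cons, Matrix.cons_val_two, Matrix.tail_cons]
    · -- sin θ cos φ
      calc |Real.sin (p 0) * Real.cos (p 1) - Real.sin (q 0) * Real.cos (q 1)|
          = |(Real.sin (p 0) - Real.sin (q 0)) * Real.cos (p 1)
              + Real.sin (q 0) * (Real.cos (p 1) - Real.cos (q 1))| := by ring_nf
        _ ≤ |(Real.sin (p 0) - Real.sin (q 0)) * Real.cos (p 1)|
              + |Real.sin (q 0) * (Real.cos (p 1) - Real.cos (q 1))| := abs_add_le _ _
        _ ≤ |p 0 - q 0| + |p 1 - q 1| := by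
            rw [abs_mul, abs_mul]
            have := st16sin_lip (p 0) (q 0)
            have := st16cos_lip (p 1) (q 1)
            have := Real.abs_cos_le_one (p 1)
            have := Real.abs_sin_le_one (q 0)
            nlinarith [abs_nonneg (Real.sin (p 0) - Real.sin (q 0)),
              abs_nonneg (Real.cos (p 1) - Real.cos (q 1)), abs_nonneg (p 0 - q 0),
              abs_nonneg (p 1 - q 1)]
        _ ≤ 2 * dist p q := by linarith
    · calc |Real.sin (p 0) * Real.sin (p 1) - Real.sin (q 0) * Real.sin (q 1)|
          = |(Real.sin (p 0) - Real.sin (q 0)) * Real.sin (p 1)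
              + Real.sin (q 0) * (Real.sin (p 1) - Real.sin (q 1))| := by ring_nf
        _ ≤ |(Real.sin (p 0) - Real.sin (q 0)) * Real.sin (p 1)|
              + |Real.sin (q 0) * (Real.sin (p 1) - Real.sin (q 1))| := abs_add_le _ _
        _ ≤ |p 0 - q 0| + |p 1 - q 1| := by
            rw [abs_mul, abs_mul]
            have := st16sin_lip (p 0) (q 0)
            have := st16sin_lip (p 1) (q 1)
            have := Real.abs_sin_le_one (p 1)
            have := Real.abs_sin_le_one (q 0)
            nlinarith [abs_nonneg (Real.sin (p 0) - Real.sin (q 0)),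
              abs_nonneg (Real.sin (p 1) - Real.sin (q 1)), abs_nonneg (p 0 - q 0),
              abs_nonneg (p 1 - q 1)]
        _ ≤ 2 * dist p q := by linarith
    · calc |Real.cos (p 0) - Real.cos (q 0)| ≤ |p 0 - q 0| := st16cos_lip _ _
        _ ≤ 2 * dist p q := by linarith
  have hA : dist (st16F p) (st16F q) ≤ Real.sqrt (∑ j : Fin 3, (2 * dist p q) ^ 2) := by
    rw [EuclideanSpace.dist_eq]
    apply Real.sqrt_le_sqrt
    apply Finset.sum_le_sum
    intro j _
    have h := key j
    have : dist (st16F p j) (st16F q j) = |st16F p j - st16F q j| := Real.dist_eq _ _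
    calc dist (st16F p j) (st16F q j) ^ 2 = |st16F p j - st16F q j| ^ 2 := by rw [this]
      _ ≤ (2 * dist p q) ^ 2 := by nlinarith [abs_nonneg (st16F p j - st16F q j)]
  have hsum12 : ∑ j : Fin 3, (2 * dist p q) ^ 2 = 12 * dist p q ^ 2 := by
    rw [Fin.sum_univ_three]; ring
  rw [hsum12] at hA
  have h36 : (12:ℝ) * dist p q ^ 2 ≤ 36 * dist p q ^ 2 := by nlinarith
  have hfin : Real.sqrt (12 * dist p q ^ 2) ≤ 6 * dist p q := by
    calc Real.sqrt (12 * dist p q ^ 2) ≤ Real.sqrt (36 * dist p q ^ 2) := Real.sqrt_le_sqrt h36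
      _ = 6 * dist p q := by
          rw [show (36:ℝ) * dist p q ^ 2 = (6 * dist p q)^2 by ring,
            Real.sqrt_sq (by positivity)]
  have h6 : ((6:ℝ≥0):ℝ) = 6 := by norm_num
  rw [h6]
  linarith

lemma st16sphere_subset :
    Metric.sphere (0 : E3) 1 ⊆ st16F '' (Metric.closedBall (0 : Fin 2 → ℝ) 4) := by
  intro x hx
  have hn : ‖x‖ = 1 := by simpa using hx
  have hsum : ∑ i : Fin 3, x i ^ 2 = 1 := by
    have h := st16s_eq x
    rw [hn] at h
    simpa [st16s] using h
  have hx2 : |x 2| ≤ 1 := by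
    have h : (x 2) ^ 2 ≤ 1 := by
      rw [← hsum, Fin.sum_univ_three]
      nlinarith [sq_nonneg (x 0), sq_nonneg (x 1)]
    nlinarith [abs_nonneg (x 2), sq_abs (x 2)]
  have hx2' := abs_le.1 hx2
  set θ := Real.arccos (x 2) with hθdef
  have hcosθ : Real.cos θ = x 2 := Real.cos_arccos hx2'.1 hx2'.2
  have hsinθ : Real.sin θ = Real.sqrt (1 - (x 2) ^ 2) := Real.sin_arccos _
  have hρ2 : (x 0) ^ 2 + (x 1) ^ 2 = 1 - (x 2) ^ 2 := by
    rw [← hsum, Fin.sum_univ_three]; ring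
  have hθ4 : |θ| ≤ 4 := by
    rw [abs_of_nonneg (Real.arccos_nonneg _)]
    exact le_trans (Real.arccos_le_pi _) (by linarith [Real.pi_le_four])
  by_cases hz : (x 0) ^ 2 + (x 1) ^ 2 = 0
  · have hx0 : x 0 = 0 := by nlinarith [sq_nonneg (x 0), sq_nonneg (x 1)]
    have hx1 : x 1 = 0 := by nlinarith [sq_nonneg (x 0), sq_nonneg (x 1)]
    have hsθ : Real.sin θ = 0 := by
      rw [hsinθ, show (1:ℝ) - (x 2)^2 = 0 by nlinarith, Real.sqrt_zero]
    refine ⟨![θ, 0], ?_, ?_⟩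
    · rw [Metric.mem_closedBall, dist_pi_le_iff (by norm_num : (0:ℝ) ≤ 4)]
      intro i
      fin_cases i
      · simpa [Real.dist_eq] using hθ4
      · simp [Real.dist_eq]
    · rw [st16F, Equiv.symm_apply_eq]
      funext j
      fin_cases j <;>
        simp [WithLp.equiv_apply, hsθ, hx0, hx1, hcosθ]
  · have hρpos : 0 < (x 0) ^ 2 + (x 1) ^ 2 :=
      lt_of_le_of_ne (by positivity) (Ne.symm hz)
    set z : ℂ := ⟨x 0, x 1⟩ with hzdef
    have hzne : z ≠ 0 := by
      intro h
      apply hz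
      have h0 : x 0 = 0 := congrArg Complex.re h
      have h1 : x 1 = 0 := congrArg Complex.im h
      rw [h0, h1]; ring
    have habs : ‖z‖ = Real.sqrt ((x 0) ^ 2 + (x 1) ^ 2) := by
      rw [Complex.norm_def]
      congr 1
      simp [Complex.normSq_mk, hzdef]
      ring
    have habs_pos : 0 < ‖z‖ := by
      rw [habs]
      exact Real.sqrt_pos.2 hρpos
    have hsin_eq : Real.sin θ = ‖z‖ := by
      rw [hsinθ, habs]
      congr 1
      linarith
    set φ := Complex.arg z with hφdef
    have hcosφ : Real.cos φ = x 0 / ‖z‖ := Complex.cos_arg hzne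
    have hsinφ : Real.sin φ = x 1 / ‖z‖ := Complex.sin_arg z
    refine ⟨![θ, φ], ?_, ?_⟩
    · rw [Metric.mem_closedBall, dist_pi_le_iff (by norm_num : (0:ℝ) ≤ 4)]
      intro i
      fin_cases i
      · simpa [Real.dist_eq] using hθ4
      · simp only [Matrix.cons_val_one, Matrix.head_cons, Pi.zero_apply, Real.dist_eq, sub_zero]
        exact le_trans (Complex.abs_arg_le_pi z) (by linarith [Real.pi_le_four])
    · rw [st16F, Equiv.symm_apply_eq]
      funext j
      fin_cases j <;>
        simp only [Matrix.cons_val_zero, Matrix.cons_val_one, Matrix.head_cons,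
          Matrix.cons_val_two, Matrix.tail_cons, WithLp.equiv_apply]
      · rw [hsin_eq, hcosφ]
        field_simp
        rfl
      · rw [hsin_eq, hsinφ]
        field_simp
        rfl
      · exact hcosθ

lemma st16sphere_lt_top : μH[2] (Metric.sphere (0 : E3) 1) < ⊤ := by
  have h1 : μH[2] (Metric.sphere (0 : E3) 1)
      ≤ μH[2] (st16F '' (Metric.closedBall (0 : Fin 2 → ℝ) 4)) :=
    measure_mono st16sphere_subset
  have h2 : μH[2] (st16F '' (Metric.closedBall (0 : Fin 2 → ℝ) 4))
      ≤ (6 : ℝ≥0∞) ^ (2:ℝ) * μH[2] (Metric.closedBall (0 : Fin 2 → ℝ) 4) := by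
    simpa using st16F_lip.hausdorffMeasure_image_le (by norm_num : (0:ℝ) ≤ 2)
      (Metric.closedBall (0 : Fin 2 → ℝ) 4)
  have h3 : μH[2] (Metric.closedBall (0 : Fin 2 → ℝ) 4) < ⊤ := by
    have hcard : (μH[(2:ℝ)] : Measure (Fin 2 → ℝ)) = volume := by
      have := hausdorffMeasure_pi_real (ι := Fin 2)
      simpa using this
    rw [hcard]
    exact (isCompact_closedBall _ _).measure_lt_top
  calc μH[2] (Metric.sphere (0 : E3) 1) ≤ _ := le_trans h1 h2
    _ < ⊤ := by
      apply ENNReal.mul_lt_top _ h3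
      exact ENNReal.rpow_lt_top_of_nonneg (by norm_num) (by norm_num)


lemma st16pd3_congrOn {f h : E3 → ℝ} {U : Set E3} (hU : IsOpen U) (hfh : Set.EqOn f h U)
    (k : Fin 3) {x : E3} (hx : x ∈ U) : pd3 k f x = pd3 k h x := by
  unfold pd3
  rw [Filter.EventuallyEq.fderiv_eq (Filter.eventuallyEq_of_mem (hU.mem_nhds hx) hfh)]

lemma st16pd3_evalT (c₁ c₂ m : ℝ) (hc₁ : 0 < c₁) (hc₂ : 0 < c₂) (ts : st16Terms)
    (k : Fin 3) (x : E3) (hx : st16u₁ c₂ m ≤ ‖x‖) :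
    pd3 k (st16evalT c₁ c₂ m ts) x = st16evalT c₁ c₂ m (st16dT k ts) x := by
  unfold pd3
  rw [(st16evalT_hasFDeriv c₁ c₂ m hc₁ hc₂ ts x hx).fderiv, st16TD_apply]

lemma st16pd3_const_add (δ : ℝ) (f : E3 → ℝ) (k : Fin 3) (x : E3) :
    pd3 k (fun y => δ + f y) x = pd3 k f x := by
  unfold pd3
  rw [fderiv_const_add]

lemma st16g_formula (c₁ c₂ m : ℝ) (hc₁ : 0 < c₁) (hc₂ : 0 < c₂) (N2 : ℝ → ℝ)
    (hN2 : ∀ r : ℝ, N2 r = c₁ - m/r + c₂*r) (y : E3) (hy : st16u₁ c₂ m ≤ ‖y‖)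
    (a b : Fin 3) :
    (y a * y b / ‖y‖^2) * ((1 - N2 ‖y‖) / N2 ‖y‖)
      = st16evalT c₁ c₂ m [((1, [a,b], 0) : st16Term)] y := by
  have hr1 : (1:ℝ) ≤ ‖y‖ := le_trans (st16u₁_pos c₂ m) hy
  have hr0 : (0:ℝ) < ‖y‖ := lt_of_lt_of_le one_pos hr1
  have hsq : Real.sqrt (st16s y) = ‖y‖ := by
    rw [st16s_eq, Real.sqrt_sq (norm_nonneg y)]
  have hM : 0 < (st16M c₁ c₂ m).eval ‖y‖ := st16M_pos c₁ c₂ m hc₁ hc₂ _ hy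
  have hMv : (st16M c₁ c₂ m).eval ‖y‖ = c₂ * ‖y‖^2 + c₁ * ‖y‖ - m := by
    simp [st16M]
  have hN2v : N2 ‖y‖ * ‖y‖ = (st16M c₁ c₂ m).eval ‖y‖ := by
    rw [hN2, hMv]
    field_simp
    ring
  have hN2ne : N2 ‖y‖ ≠ 0 := by
    intro h
    rw [h, zero_mul] at hN2v
    exact (ne_of_gt hM) hN2v.symm
  have hEv : st16evalT c₁ c₂ m [((1, [a,b], 0) : st16Term)] y
      = (y a * y b) * ((‖y‖ - (st16M c₁ c₂ m).eval ‖y‖)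
          / (‖y‖^2 * (st16M c₁ c₂ m).eval ‖y‖)) := by
    simp only [st16evalT, List.map_cons, List.map_nil, List.sum_cons, List.sum_nil, add_zero,
      st16Q, st16p, hsq]
    rw [st16mon_cons, st16mon_cons, st16mon_nil]
    simp only [eval_sub, eval_X]
    ring
  rw [hEv, ← hN2v]
  have hyne : ‖y‖ ≠ 0 := ne_of_gt hr0
  field_simp

lemma st16chain (c₁ c₂ m rstar : ℝ) (hc₁ : 0 < c₁) (hc₂ : 0 < c₂)
    (g : E3 → Fin 3 → Fin 3 → ℝ)
    (hgeq : ∀ a b : Fin 3, Set.EqOn (fun y => g y a b)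
      (fun y => (if a = b then (1:ℝ) else 0)
        + st16evalT c₁ c₂ m [((1, [a,b], 0) : st16Term)] y)
      {x : E3 | max rstar (st16u₁ c₂ m) < ‖x‖}) :
    ∀ a b k i j : Fin 3, ∀ x ∈ {x : E3 | max rstar (st16u₁ c₂ m) < ‖x‖},
      (pd3 k (fun y => g y a b) x
        = st16evalT c₁ c₂ m (st16dT k [((1, [a,b], 0) : st16Term)]) x) ∧
      (pd3 j (pd3 i (pd3 k (fun y => g y a b))) x
        = st16evalT c₁ c₂ m
            (st16dT j (st16dT i (st16dT k [((1, [a,b], 0) : st16Term)]))) x) := by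
  intro a b k i j
  set U := {x : E3 | max rstar (st16u₁ c₂ m) < ‖x‖} with hUdef
  have hUopen : IsOpen U := isOpen_lt continuous_const continuous_norm
  have hmemu : ∀ x ∈ U, st16u₁ c₂ m ≤ ‖x‖ := fun x hx =>
    le_of_lt (lt_of_le_of_lt (le_max_right rstar _) hx)
  have h1 : Set.EqOn (pd3 k (fun y => g y a b))
      (st16evalT c₁ c₂ m (st16dT k [((1, [a,b], 0) : st16Term)])) U := by
    intro x hx
    rw [st16pd3_congrOn hUopen (hgeq a b) k hx, st16pd3_const_add,
      st16pd3_evalT c₁ c₂ m hc₁ hc₂ _ k x (hmemu x hx)]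
  have h2 : Set.EqOn (pd3 i (pd3 k (fun y => g y a b)))
      (st16evalT c₁ c₂ m (st16dT i (st16dT k [((1, [a,b], 0) : st16Term)]))) U := by
    intro x hx
    rw [st16pd3_congrOn hUopen h1 i hx,
      st16pd3_evalT c₁ c₂ m hc₁ hc₂ _ i x (hmemu x hx)]
  intro x hx
  refine ⟨h1 hx, ?_⟩
  rw [st16pd3_congrOn hUopen h2 j hx,
    st16pd3_evalT c₁ c₂ m hc₁ hc₂ _ j x (hmemu x hx)]

lemma st16sum2_le (f : Fin 3 → Fin 3 → ℝ) (hf : ∀ a b, 0 ≤ f a b) (a b : Fin 3) :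
    f a b ≤ ∑ x : Fin 3, ∑ y : Fin 3, f x y := by
  have h1 : f a b ≤ ∑ y, f a y := Finset.single_le_sum (fun y _ => hf a y) (Finset.mem_univ b)
  have h2 : (∑ y, f a y) ≤ ∑ x, ∑ y, f x y :=
    Finset.single_le_sum (fun x _ => Finset.sum_nonneg fun y _ => hf x y) (Finset.mem_univ a)
  linarith

lemma st16sum3_le (f : Fin 3 → Fin 3 → Fin 3 → ℝ) (hf : ∀ a b c, 0 ≤ f a b c) (a b c : Fin 3) :
    f a b c ≤ ∑ x : Fin 3, ∑ y : Fin 3, ∑ z : Fin 3, f x y z := by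
  have h1 : f a b c ≤ ∑ y, ∑ z, f a y z :=
    st16sum2_le (fun y z => f a y z) (fun y z => hf a y z) b c
  have h2 : (∑ y, ∑ z, f a y z) ≤ ∑ x, ∑ y, ∑ z, f x y z :=
    Finset.single_le_sum
      (fun x _ => Finset.sum_nonneg fun y _ => Finset.sum_nonneg fun z _ => hf x y z)
      (Finset.mem_univ a)
  linarith

lemma st16abs_sum2 (f B : Fin 3 → Fin 3 → ℝ) (r3 : ℝ) (hr3 : 0 < r3)
    (h : ∀ i a, |f i a| ≤ B i a / r3) :
    |∑ i, ∑ a, f i a| ≤ (∑ i, ∑ a, B i a) / r3 := by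
  calc |∑ i, ∑ a, f i a| ≤ ∑ i, |∑ a, f i a| := Finset.abs_sum_le_sum_abs _ _
    _ ≤ ∑ i, ∑ a, |f i a| :=
        Finset.sum_le_sum (fun i _ => Finset.abs_sum_le_sum_abs _ _)
    _ ≤ ∑ i, ∑ a, B i a / r3 :=
        Finset.sum_le_sum (fun i _ => Finset.sum_le_sum (fun a _ => h i a))
    _ = (∑ i, ∑ a, B i a) / r3 := by rw [Finset.sum_div]; congr 1; funext i; rw [Finset.sum_div]

/-- For the exterior metric
`g = N(r)⁻²dr² + r²g_{S²}`, `N² = c₁ − m/r + c₂r`, written in Cartesian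
coordinates as `g_{ij} = δ_{ij} + (x_i x_j/r²)(1−N²)/N²`, one has
`g_{ij} − δ_{ij} = O(r⁰)` with derivatives decaying one order per derivative;
the third-derivative combination `∂_j∂_i∂_i g_{aa} − ∂_j∂_u∂_i g_{ui}` is
`O(r^{-3})`, and hence its flux integral over large spheres tends to `0`. -/
theorem stmt_16 (c₁ c₂ m rstar : ℝ) (hc₁ : 0 < c₁) (hc₂ : 0 < c₂)
    (hrstar : 0 < rstar)
    (N2 : ℝ → ℝ) (hN2 : ∀ r : ℝ, N2 r = c₁ - m/r + c₂*r)
    (g : EuclideanSpace ℝ (Fin 3) → Fin 3 → Fin 3 → ℝ)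
    (hg : ∀ x : EuclideanSpace ℝ (Fin 3), rstar < ‖x‖ → ∀ i j,
      g x i j = (if i = j then (1:ℝ) else 0)
        + (x i * x j / ‖x‖^2) * ((1 - N2 ‖x‖) / N2 ‖x‖))
    (T : Fin 3 → EuclideanSpace ℝ (Fin 3) → ℝ)
    (hT : ∀ j x, T j x =
      (∑ i, ∑ a, pd3 j (pd3 i (pd3 i (fun y => g y a a))) x)
      - (∑ u, ∑ i, pd3 j (pd3 u (pd3 i (fun y => g y u i))) x)) :
    (∃ C R₀ : ℝ, ∀ i j k, ∀ x : EuclideanSpace ℝ (Fin 3), R₀ ≤ ‖x‖ →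
      |g x i j - (if i = j then (1:ℝ) else 0)| ≤ C ∧
      |pd3 k (fun y => g y i j) x| ≤ C / ‖x‖) ∧
    (∃ C R₀ : ℝ, ∀ j, ∀ x : EuclideanSpace ℝ (Fin 3), R₀ ≤ ‖x‖ →
      |T j x| ≤ C / ‖x‖^3) ∧
    Tendsto (fun r : ℝ =>
        ∫ ω in Metric.sphere (0 : EuclideanSpace ℝ (Fin 3)) 1,
          (∑ j, T j (r • ω) * ω j) * r^2 ∂(μH[2]))
      atTop (nhds 0) := by
  classical
  have hu₁1 : (1:ℝ) ≤ st16u₁ c₂ m := st16u₁_pos c₂ m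
  have hmemu : ∀ x ∈ {x : E3 | max rstar (st16u₁ c₂ m) < ‖x‖}, st16u₁ c₂ m ≤ ‖x‖ :=
    fun x hx => le_of_lt (lt_of_le_of_lt (le_max_right rstar _) hx)
  have hmemU : ∀ x : E3, max rstar (st16u₁ c₂ m) + 1 ≤ ‖x‖ →
      x ∈ {x : E3 | max rstar (st16u₁ c₂ m) < ‖x‖} :=
    fun x hx => lt_of_lt_of_le (by linarith) hx
  have hgeq : ∀ a b : Fin 3, Set.EqOn (fun y => g y a b)
      (fun y => (if a = b then (1:ℝ) else 0)
        + st16evalT c₁ c₂ m [((1, [a,b], 0) : st16Term)] y)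
      {x : E3 | max rstar (st16u₁ c₂ m) < ‖x‖} := by
    intro a b y hy
    have hry : rstar < ‖y‖ := lt_of_le_of_lt (le_max_left _ _) hy
    simp only
    rw [hg y hry a b, st16g_formula c₁ c₂ m hc₁ hc₂ N2 hN2 y (hmemu y hy) a b]
  have hchain := st16chain c₁ c₂ m rstar hc₁ hc₂ g hgeq
  have hw0 : ∀ a b : Fin 3, ∀ q ∈ [((1, [a,b], 0) : st16Term)],
      q.2.1.length + 0 ≤ 2 * (q.2.2 + 1) := by
    intro a b q hq
    simp only [List.mem_singleton] at hq
    subst hq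
    simp
  have hCTnn : ∀ ts : st16Terms, 0 ≤ st16CT c₁ c₂ m ts :=
    fun ts => st16CT_nonneg c₁ c₂ m hc₂ ts
  -- Part 2 (proved first, with nonnegative constant, for reuse in part 3)
  have key2 : ∃ C R₀ : ℝ, 0 ≤ C ∧ ∀ j, ∀ x : E3, R₀ ≤ ‖x‖ → |T j x| ≤ C / ‖x‖^3 := by
    refine ⟨∑ j : Fin 3,
        ((∑ i : Fin 3, ∑ a : Fin 3, st16CT c₁ c₂ m
            (st16dT j (st16dT i (st16dT i [((1, [a,a], 0) : st16Term)]))))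
          + (∑ u : Fin 3, ∑ i : Fin 3, st16CT c₁ c₂ m
            (st16dT j (st16dT u (st16dT i [((1, [u,i], 0) : st16Term)]))))),
      max rstar (st16u₁ c₂ m) + 1, ?_, ?_⟩
    · apply Finset.sum_nonneg
      intro j _
      have h1 : 0 ≤ ∑ i : Fin 3, ∑ a : Fin 3, st16CT c₁ c₂ m
          (st16dT j (st16dT i (st16dT i [((1, [a,a], 0) : st16Term)]))) :=
        Finset.sum_nonneg fun i _ => Finset.sum_nonneg fun a _ => hCTnn _
      have h2 : 0 ≤ ∑ u : Fin 3, ∑ i : Fin 3, st16CT c₁ c₂ m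
          (st16dT j (st16dT u (st16dT i [((1, [u,i], 0) : st16Term)]))) :=
        Finset.sum_nonneg fun u _ => Finset.sum_nonneg fun i _ => hCTnn _
      linarith
    intro j x hx
    have hxU := hmemU x hx
    have hxu := hmemu x hxU
    have hx1 : (1:ℝ) ≤ ‖x‖ := le_trans hu₁1 hxu
    have hx0 : (0:ℝ) < ‖x‖ := by linarith
    have hr3 : (0:ℝ) < ‖x‖^3 := by positivity
    rw [hT j x]
    have e1 : ∀ i a : Fin 3, pd3 j (pd3 i (pd3 i (fun y => g y a a))) x
        = st16evalT c₁ c₂ m (st16dT j (st16dT i (st16dT i [((1, [a,a], 0) : st16Term)]))) x :=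
      fun i a => (hchain a a i i j x hxU).2
    have e2 : ∀ u i : Fin 3, pd3 j (pd3 u (pd3 i (fun y => g y u i))) x
        = st16evalT c₁ c₂ m (st16dT j (st16dT u (st16dT i [((1, [u,i], 0) : st16Term)]))) x :=
      fun u i => (hchain u i i u j x hxU).2
    rw [show (∑ i, ∑ a, pd3 j (pd3 i (pd3 i (fun y => g y a a))) x)
        = ∑ i : Fin 3, ∑ a : Fin 3, st16evalT c₁ c₂ m
            (st16dT j (st16dT i (st16dT i [((1, [a,a], 0) : st16Term)]))) x from
      Finset.sum_congr rfl fun i _ => Finset.sum_congr rfl fun a _ => e1 i a]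
    rw [show (∑ u, ∑ i, pd3 j (pd3 u (pd3 i (fun y => g y u i))) x)
        = ∑ u : Fin 3, ∑ i : Fin 3, st16evalT c₁ c₂ m
            (st16dT j (st16dT u (st16dT i [((1, [u,i], 0) : st16Term)]))) x from
      Finset.sum_congr rfl fun u _ => Finset.sum_congr rfl fun i _ => e2 u i]
    have hb1 : |∑ i : Fin 3, ∑ a : Fin 3, st16evalT c₁ c₂ m
        (st16dT j (st16dT i (st16dT i [((1, [a,a], 0) : st16Term)]))) x|
        ≤ (∑ i : Fin 3, ∑ a : Fin 3, st16CT c₁ c₂ m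
            (st16dT j (st16dT i (st16dT i [((1, [a,a], 0) : st16Term)])))) / ‖x‖^3 := by
      apply st16abs_sum2 _ _ _ hr3
      intro i a
      exact st16evalT_bound c₁ c₂ m hc₁ hc₂ _ 3
        (st16dT_wt j _ 2 (st16dT_wt i _ 1 (st16dT_wt i _ 0 (hw0 a a)))) x hxu
    have hb2 : |∑ u : Fin 3, ∑ i : Fin 3, st16evalT c₁ c₂ m
        (st16dT j (st16dT u (st16dT i [((1, [u,i], 0) : st16Term)]))) x|
        ≤ (∑ u : Fin 3, ∑ i : Fin 3, st16CT c₁ c₂ m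
            (st16dT j (st16dT u (st16dT i [((1, [u,i], 0) : st16Term)])))) / ‖x‖^3 := by
      apply st16abs_sum2 _ _ _ hr3
      intro u i
      exact st16evalT_bound c₁ c₂ m hc₁ hc₂ _ 3
        (st16dT_wt j _ 2 (st16dT_wt u _ 1 (st16dT_wt i _ 0 (hw0 u i)))) x hxu
    set Dj := fun j' : Fin 3 =>
        (∑ i : Fin 3, ∑ a : Fin 3, st16CT c₁ c₂ m
            (st16dT j' (st16dT i (st16dT i [((1, [a,a], 0) : st16Term)]))))
          + (∑ u : Fin 3, ∑ i : Fin 3, st16CT c₁ c₂ m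
            (st16dT j' (st16dT u (st16dT i [((1, [u,i], 0) : st16Term)])))) with hDj
    have hDjnn : ∀ j', 0 ≤ Dj j' := by
      intro j'
      have h1 : 0 ≤ ∑ i : Fin 3, ∑ a : Fin 3, st16CT c₁ c₂ m
          (st16dT j' (st16dT i (st16dT i [((1, [a,a], 0) : st16Term)]))) :=
        Finset.sum_nonneg fun i _ => Finset.sum_nonneg fun a _ => hCTnn _
      have h2 : 0 ≤ ∑ u : Fin 3, ∑ i : Fin 3, st16CT c₁ c₂ m
          (st16dT j' (st16dT u (st16dT i [((1, [u,i], 0) : st16Term)]))) :=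
        Finset.sum_nonneg fun u _ => Finset.sum_nonneg fun i _ => hCTnn _
      rw [hDj]; dsimp only; linarith
    have hDjle : Dj j ≤ ∑ j' : Fin 3, Dj j' :=
      Finset.single_le_sum (fun j' _ => hDjnn j') (Finset.mem_univ j)
    calc |_ - _| ≤ |∑ i : Fin 3, ∑ a : Fin 3, st16evalT c₁ c₂ m
            (st16dT j (st16dT i (st16dT i [((1, [a,a], 0) : st16Term)]))) x|
          + |∑ u : Fin 3, ∑ i : Fin 3, st16evalT c₁ c₂ m
            (st16dT j (st16dT u (st16dT i [((1, [u,i], 0) : st16Term)]))) x| := abs_sub _ _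
      _ ≤ Dj j / ‖x‖^3 := by rw [hDj]; dsimp only; rw [add_div]; exact add_le_add hb1 hb2
      _ ≤ (∑ j' : Fin 3, Dj j') / ‖x‖^3 := by
          exact div_le_div_of_nonneg_right hDjle hr3.le |>.trans_eq rfl
  obtain ⟨C2, R2, hC2nn, hC2⟩ := key2
  refine ⟨?_, ⟨C2, R2, hC2⟩, ?_⟩
  · -- Part 1
    refine ⟨(∑ a : Fin 3, ∑ b : Fin 3, st16CT c₁ c₂ m [((1, [a,b], 0) : st16Term)])
        + ∑ a : Fin 3, ∑ b : Fin 3, ∑ k : Fin 3,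
            st16CT c₁ c₂ m (st16dT k [((1, [a,b], 0) : st16Term)]),
      max rstar (st16u₁ c₂ m) + 1, ?_⟩
    intro i j k x hx
    have hxU := hmemU x hx
    have hxu := hmemu x hxU
    have hx1 : (1:ℝ) ≤ ‖x‖ := le_trans hu₁1 hxu
    have hx0 : (0:ℝ) < ‖x‖ := by linarith
    have hS2nn : 0 ≤ ∑ a : Fin 3, ∑ b : Fin 3, ∑ k' : Fin 3,
        st16CT c₁ c₂ m (st16dT k' [((1, [a,b], 0) : st16Term)]) :=
      Finset.sum_nonneg fun a _ => Finset.sum_nonneg fun b _ =>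
        Finset.sum_nonneg fun k' _ => hCTnn _
    have hS1nn : 0 ≤ ∑ a : Fin 3, ∑ b : Fin 3, st16CT c₁ c₂ m [((1, [a,b], 0) : st16Term)] :=
      Finset.sum_nonneg fun a _ => Finset.sum_nonneg fun b _ => hCTnn _
    constructor
    · have hgx := hgeq i j hxU
      simp only at hgx
      rw [hgx, add_sub_cancel_left]
      have hb := st16evalT_bound c₁ c₂ m hc₁ hc₂ _ 0 (hw0 i j) x hxu
      rw [pow_zero, div_one] at hb
      refine le_trans hb ?_
      have h1 : st16CT c₁ c₂ m [((1, [i,j], 0) : st16Term)]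
          ≤ ∑ a : Fin 3, ∑ b : Fin 3, st16CT c₁ c₂ m [((1, [a,b], 0) : st16Term)] :=
        st16sum2_le (fun a b => st16CT c₁ c₂ m [((1, [a,b], 0) : st16Term)])
          (fun a b => hCTnn _) i j
      linarith
    · rw [(hchain i j k k k x hxU).1]
      have hb := st16evalT_bound c₁ c₂ m hc₁ hc₂ _ 1 (st16dT_wt k _ 0 (hw0 i j)) x hxu
      rw [pow_one] at hb
      refine le_trans hb ?_
      have h1 : st16CT c₁ c₂ m (st16dT k [((1, [i,j], 0) : st16Term)])
          ≤ ∑ a : Fin 3, ∑ b : Fin 3, ∑ k' : Fin 3,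
              st16CT c₁ c₂ m (st16dT k' [((1, [a,b], 0) : st16Term)]) :=
        st16sum3_le (fun a b k' => st16CT c₁ c₂ m (st16dT k' [((1, [a,b], 0) : st16Term)]))
          (fun a b k' => hCTnn _) i j k
      exact div_le_div_of_nonneg_right (by linarith) hx0.le
  · -- Part 3 : flux integral tends to 0
    have hμ := st16sphere_lt_top
    set A := (μH[2] (Metric.sphere (0:E3) 1)).toReal with hA
    have hAnn : 0 ≤ A := ENNReal.toReal_nonneg
    have htend : Tendsto (fun r : ℝ => 3 * C2 * A / r) atTop (nhds 0) :=
      tendsto_const_nhds.div_atTop tendsto_id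
    refine squeeze_zero_norm' ?_ htend
    filter_upwards [eventually_ge_atTop (max R2 1)] with r hr
    have hr1 : (1:ℝ) ≤ r := le_trans (le_max_right _ _) hr
    have hr0 : (0:ℝ) < r := by linarith
    have hrR : R2 ≤ r := le_trans (le_max_left _ _) hr
    have hbd : ∀ ω ∈ Metric.sphere (0:E3) 1,
        ‖(∑ j, T j (r • ω) * ω j) * r^2‖ ≤ 3 * C2 / r := by
      intro ω hω
      have hωn : ‖ω‖ = 1 := by simpa using hω
      have hsn : ‖r • ω‖ = r := by
        rw [norm_smul, hωn, mul_one, Real.norm_eq_abs, abs_of_pos hr0]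
      have hT3 : ∀ j, |T j (r • ω)| ≤ C2 / r^3 := by
        intro j
        have := hC2 j (r • ω) (by rw [hsn]; exact hrR)
        rwa [hsn] at this
      have hωj : ∀ j : Fin 3, |ω j| ≤ 1 :=
        fun j => le_trans (st16coord_le ω j) (le_of_eq hωn)
      rw [Real.norm_eq_abs, abs_mul]
      have h1 : |∑ j, T j (r • ω) * ω j| ≤ 3 * (C2 / r^3) := by
        calc |∑ j, T j (r • ω) * ω j| ≤ ∑ j, |T j (r • ω) * ω j| :=
            Finset.abs_sum_le_sum_abs _ _
          _ ≤ ∑ _j : Fin 3, C2 / r^3 := by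
              apply Finset.sum_le_sum
              intro j _
              rw [abs_mul]
              calc |T j (r • ω)| * |ω j| ≤ (C2 / r^3) * 1 :=
                  mul_le_mul (hT3 j) (hωj j) (abs_nonneg _) (by positivity)
                _ = C2 / r^3 := mul_one _
          _ = 3 * (C2 / r^3) := by
              rw [Finset.sum_const]
              simp
      have h2 : |r^2| = r^2 := abs_of_pos (by positivity)
      rw [h2]
      calc |∑ j, T j (r • ω) * ω j| * r^2 ≤ (3 * (C2 / r^3)) * r^2 :=
          mul_le_mul_of_nonneg_right h1 (by positivity)
        _ = 3 * C2 / r := by field_simp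
    have hint := norm_setIntegral_le_of_norm_le_const (μ := μH[2]) hμ
      (fun ω hω => hbd ω hω)
    calc ‖∫ ω in Metric.sphere (0:E3) 1, (∑ j, T j (r • ω) * ω j) * r^2 ∂μH[2]‖
        ≤ (3 * C2 / r) * A := hint
      _ = 3 * C2 * A / r := by ring
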